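/- Let p ≥ 7 be a prime, let j be an integer not divisible by p, and let ε_1, ε_2 ∈ {1, −1}. Then there exists an integer i such that the Legendre symbol ((i − j)/p) equals ε_1 and the Legendre symbol ((i + j)/p) equals ε_2. -/

import Mathlib

open Finset

variable {F : Type*} [Field F] [Fintype F] [DecidableEq F]

lemma sum_shift (hF : ringChar F ≠ 2) (c : F) :
    ∑ t : F, quadraticChar F (t + c) = 0 := by
  have h := Equiv.sum_comp (Equiv.addRight c) (fun u => quadraticChar F u)
  simp only [Equiv.coe_addRight] at h
  rw [h]
  exact quadraticChar_sum_zero hF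

lemma sum_shifted_pair (hF : ringChar F ≠ 2) :
    ∑ t : F, quadraticChar F (t - 1) * quadraticChar F (t + 1) = -1 := by
  have h2 : (2 : F) ≠ 0 := Ring.two_ne_zero hF
  have key : ∀ t : F, quadraticChar F (t - 1) * quadraticChar F (t + 1)
      = quadraticChar F (t ^ 2 - 1) := by
    intro t
    rw [← map_mul]
    ring_nf
  simp_rw [key]
  have h0 : ∑ t : F, quadraticChar F (t ^ 2 - 1)
      = ∑ t ∈ univ.erase (-1 : F), quadraticChar F (t ^ 2 - 1) := by
    rw [Finset.sum_erase]
    simp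
  rw [h0]
  have hbij : ∑ t ∈ univ.erase (-1 : F), quadraticChar F (t ^ 2 - 1)
      = ∑ s ∈ univ.erase (1 : F), quadraticChar F s := by
    refine Finset.sum_nbij' (fun t => (t - 1) * (t + 1)⁻¹)
      (fun s => (1 + s) * (1 - s)⁻¹) ?_ ?_ ?_ ?_ ?_
    · intro t ht
      have ht1 : t + 1 ≠ 0 := by
        simp only [mem_erase, mem_univ, and_true] at ht
        intro h; apply ht; linear_combination h
      simp only [mem_erase, mem_univ, and_true]
      intro h
      field_simp at h
      apply h2
      linear_combination -h
    · intro s hs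
      have hs1 : (1 : F) - s ≠ 0 := by
        simp only [mem_erase, mem_univ, and_true] at hs
        intro h; apply hs; linear_combination -h
      simp only [mem_erase, mem_univ, and_true]
      intro h
      field_simp at h
      apply h2
      linear_combination h
    · intro t ht
      have ht1 : t + 1 ≠ 0 := by
        simp only [mem_erase, mem_univ, and_true] at ht
        intro h; apply ht; linear_combination h
      have hd : (1 : F) - (t - 1) * (t + 1)⁻¹ ≠ 0 := by
        intro h
        apply h2
        have : ((1 : F) - (t - 1) * (t + 1)⁻¹) * (t + 1) = 0 := by rw [h, zero_mul]
        rw [sub_mul, mul_assoc, inv_mul_cancel₀ ht1, mul_one] at this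
        linear_combination this
      field_simp
      ring_nf
      rw [mul_assoc, inv_mul_cancel₀ h2, mul_one]
    · intro s hs
      have hs1 : (1 : F) - s ≠ 0 := by
        simp only [mem_erase, mem_univ, and_true] at hs
        intro h; apply hs; linear_combination -h
      have hd : (1 + s) * (1 - s)⁻¹ + 1 ≠ 0 := by
        intro h
        apply h2
        have : ((1 + s) * (1 - s)⁻¹ + 1) * (1 - s) = 0 := by rw [h, zero_mul]
        rw [add_mul, mul_assoc, inv_mul_cancel₀ hs1, mul_one, one_mul] at this
        linear_combination this
      field_simp
      ring_nf
      rw [mul_assoc, inv_mul_cancel₀ h2, mul_one]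
    · intro t ht
      have ht1 : t + 1 ≠ 0 := by
        simp only [mem_erase, mem_univ, and_true] at ht
        intro h; apply ht; linear_combination h
      have : t ^ 2 - 1 = (t - 1) * (t + 1)⁻¹ * (t + 1) ^ 2 := by
        field_simp; ring
      rw [this, map_mul, quadraticChar_sq_one' ht1, mul_one]
  rw [hbij, Finset.sum_erase_eq_sub (mem_univ _), quadraticChar_sum_zero hF]
  simp

lemma exists_pattern (hF : ringChar F ≠ 2) (hcard : 7 ≤ Fintype.card F)
    (s1 s2 : ℤ) (hs1 : s1 = 1 ∨ s1 = -1) (hs2 : s2 = 1 ∨ s2 = -1) :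
    ∃ t : F, quadraticChar F (t - 1) = s1 ∧ quadraticChar F (t + 1) = s2 := by
  by_contra hcon
  push_neg at hcon
  set χ := quadraticChar F with hχ
  set f : F → ℤ := fun t => (1 + s1 * χ (t - 1)) * (1 + s2 * χ (t + 1)) with hf
  have h2 : (2 : F) ≠ 0 := Ring.two_ne_zero hF
  have h1m : (1 : F) ≠ -1 := by
    intro h; apply h2; linear_combination h
  -- upper bound
  have hub : ∀ t : F, f t ≤ (if t = 1 then 2 else 0) + (if t = -1 then 2 else 0) := by
    intro t
    by_cases ht1 : t = 1
    · subst ht1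
      simp only [if_pos rfl, if_neg h1m, hf]
      have : (1 : F) - 1 = 0 := by ring
      rw [this, quadraticChar_zero, mul_zero, add_zero, one_mul]
      have hne : (1 : F) + 1 ≠ 0 := by intro h; apply h2; linear_combination h
      rcases quadraticChar_dichotomy hne with h | h <;> rw [h] <;> rcases hs2 with h' | h' <;> subst h' <;> norm_num
    by_cases ht2 : t = -1
    · subst ht2
      simp only [if_neg ht1, if_pos rfl]
      have : (-1 : F) + 1 = 0 := by ring
      rw [hf]
      simp only
      rw [this, quadraticChar_zero, mul_zero, add_zero, mul_one]
      have hne : (-1 : F) - 1 ≠ 0 := by intro h; apply h2; linear_combination -h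
      rcases quadraticChar_dichotomy hne with h | h <;> rw [h] <;> rcases hs1 with h' | h' <;> subst h' <;> norm_num
    · simp only [if_neg ht1, if_neg ht2, add_zero]
      have hne1 : t - 1 ≠ 0 := fun h => ht1 (by linear_combination h)
      have hne2 : t + 1 ≠ 0 := fun h => ht2 (by linear_combination h)
      have hc := hcon t
      rcases quadraticChar_dichotomy hne1 with h | h <;>
        rcases quadraticChar_dichotomy hne2 with h' | h' <;>
        rcases hs1 with e | e <;> rcases hs2 with e' | e' <;>
        subst e <;> subst e' <;> rw [hf] <;> simp only <;> rw [h, h'] <;> norm_num <;>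
        exact hc h h'
  have hsum_ub : ∑ t : F, f t ≤ 4 := by
    calc ∑ t : F, f t ≤ ∑ t : F, ((if t = 1 then 2 else 0) + (if t = -1 then 2 else 0)) :=
          Finset.sum_le_sum (fun t _ => hub t)
      _ = 4 := by
          rw [Finset.sum_add_distrib, Finset.sum_ite_eq' univ (1 : F) (fun _ => (2:ℤ)),
            Finset.sum_ite_eq' univ (-1 : F) (fun _ => (2:ℤ))]
          simp
  -- lower bound
  have hexp : ∑ t : F, f t = (Fintype.card F : ℤ) + s1 * s2 * (-1) := by
    have : ∀ t : F, f t = 1 + s1 * χ (t - 1) + s2 * χ (t + 1)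
        + s1 * s2 * (χ (t - 1) * χ (t + 1)) := by intro t; rw [hf]; ring
    simp_rw [this]
    rw [Finset.sum_add_distrib, Finset.sum_add_distrib, Finset.sum_add_distrib,
      ← Finset.mul_sum, ← Finset.mul_sum, ← Finset.mul_sum]
    have e1 : ∑ t : F, χ (t - 1) = 0 := by
      have := sum_shift hF (-1 : F); simpa [sub_eq_add_neg, hχ] using this
    have e2 : ∑ t : F, χ (t + 1) = 0 := sum_shift hF 1
    have e3 : ∑ t : F, χ (t - 1) * χ (t + 1) = -1 := sum_shifted_pair hF
    rw [e1, e2, e3]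
    simp [Finset.card_univ]
  have hs12 : s1 * s2 = 1 ∨ s1 * s2 = -1 := by
    rcases hs1 with h | h <;> rcases hs2 with h' | h' <;> subst h <;> subst h' <;> norm_num
  have : (7 : ℤ) ≤ (Fintype.card F : ℤ) := by exact_mod_cast hcard
  rcases hs12 with h | h <;> rw [hexp, h] at hsum_ub <;> omega

/-- For a prime `p ≥ 7`, an integer `j` not divisible by `p` and
signs `ε₁, ε₂ ∈ {±1}`, there is an integer `i` with `((i−j)/p) = ε₁` and
`((i+j)/p) = ε₂`. -/
theorem legendre_two_values (p : ℕ) [Fact p.Prime] (hp : 7 ≤ p)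
    (j : ℤ) (hj : ¬ (p : ℤ) ∣ j)
    (e1 e2 : ℤ) (he1 : e1 = 1 ∨ e1 = -1) (he2 : e2 = 1 ∨ e2 = -1) :
    ∃ i : ℤ, legendreSym p (i - j) = e1 ∧ legendreSym p (i + j) = e2 := by
  have hF : ringChar (ZMod p) ≠ 2 := by
    rw [ZMod.ringChar_zmod_n]; omega
  have hcard : 7 ≤ Fintype.card (ZMod p) := by rw [ZMod.card]; exact hp
  set χ := quadraticChar (ZMod p) with hχ
  have hj0 : (j : ZMod p) ≠ 0 := by
    rwa [Ne, ZMod.intCast_zmod_eq_zero_iff_dvd]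
  have hjd := quadraticChar_dichotomy hj0
  have hjsq : χ (j : ZMod p) * χ (j : ZMod p) = 1 := by
    rcases hjd with h | h <;> rw [h] <;> norm_num
  have hs1 : e1 * χ (j : ZMod p) = 1 ∨ e1 * χ (j : ZMod p) = -1 := by
    rcases he1 with h | h <;> rcases hjd with h' | h' <;> rw [h, h'] <;> norm_num
  have hs2 : e2 * χ (j : ZMod p) = 1 ∨ e2 * χ (j : ZMod p) = -1 := by
    rcases he2 with h | h <;> rcases hjd with h' | h' <;> rw [h, h'] <;> norm_num
  obtain ⟨t, ht1, ht2⟩ := exists_pattern hF hcard _ _ hs1 hs2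
  refine ⟨(((j : ZMod p) * t).val : ℤ), ?_, ?_⟩
  · show χ _ = e1
    have : (((((j : ZMod p) * t).val : ℤ) - j : ℤ) : ZMod p) = (j : ZMod p) * (t - 1) := by
      push_cast
      rw [ZMod.natCast_val, ZMod.cast_id]
      ring
    rw [this, map_mul, ht1]
    rcases he1 with h | h <;> rcases hjd with h' | h' <;> rw [h, h'] <;> norm_num
  · show χ _ = e2
    have : (((((j : ZMod p) * t).val : ℤ) + j : ℤ) : ZMod p) = (j : ZMod p) * (t + 1) := by
      push_cast
      rw [ZMod.natCast_val, ZMod.cast_id]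
      ring
    rw [this, map_mul, ht2]
    rcases he2 with h | h <;> rcases hjd with h' | h' <;> rw [h, h'] <;> norm_num
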